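/- Let (λ_m)_{m≥1} be a nonincreasing summable sequence of nonnegative reals with ∑_{m=1}^∞ λ_m = 1, and for each d ≥ 1 let μ^{(d)} be its product-coarse-graining at scale d. Then ∑_{m=1}^∞ |μ^{(d)}_m − λ_m| tends to 0 as d → ∞. -/

import Mathlib

/-- Product-coarse-graining at scale `d` of a sequence `lam` (0-indexed: position `n`
corresponds to the 1-indexed position `m = n + 1`). -/
noncomputable def productCoarseGraining (lam : ℕ → ℝ) (d : ℕ) (n : ℕ) : ℝ :=
  (∑' j : ℕ, lam (j * d + n % d)) * (∑ l ∈ Finset.range d, lam (n / d * d + l))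

open Filter Finset

theorem stmt3 (lam : ℕ → ℝ) (hanti : Antitone lam) (hnn : ∀ n, 0 ≤ lam n)
    (hsum : Summable lam) (h1 : ∑' n, lam n = 1) :
    Filter.Tendsto (fun d : ℕ => ∑' n, |productCoarseGraining lam d n - lam n|)
      Filter.atTop (nhds 0) := by
  have key : ∀ d : ℕ, 0 < d →
      ∑' n, |productCoarseGraining lam d n - lam n| ≤ 4 * ∑' n, lam (n + d) := by
    intro d hd
    haveI : NeZero d := ⟨hd.ne'⟩
    set t : ℝ := ∑' n, lam (n + d) with ht
    have ht0 : 0 ≤ t := tsum_nonneg fun n => hnn _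
    set c : ℕ → ℝ := fun k => ∑' j : ℕ, lam (j * d + k) with hc
    set r : ℕ → ℝ := fun i => ∑ l ∈ Finset.range d, lam (i * d + l) with hr
    set μ := productCoarseGraining lam d with hμ
    have hμeq : ∀ n, μ n = c (n % d) * r (n / d) := fun n => rfl
    have hcnn : ∀ k, 0 ≤ c k := fun k => tsum_nonneg fun j => hnn _
    have hrnn : ∀ i, 0 ≤ r i := fun i => Finset.sum_nonneg fun l _ => hnn _
    have hμnn : ∀ n, 0 ≤ μ n := fun n => mul_nonneg (hcnn _) (hrnn _)
    -- the divMod equivalence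
    set e := Nat.divModEquiv d with he
    set F : ℕ × Fin d → ℝ := fun p => lam (p.1 * d + (p.2 : ℕ)) with hF
    have hSF : Summable F := e.symm.summable_iff.mpr hsum
    have hFT : ∑' p, F p = 1 := by rw [← h1]; exact e.symm.tsum_eq lam
    have hcsum : ∀ k, Summable fun j => lam (j * d + k) := by
      intro k
      refine hsum.comp_injective fun a b hab => ?_
      exact Nat.eq_of_mul_eq_mul_right hd (Nat.add_right_cancel hab)
    have hrF : ∀ i, r i = ∑' k : Fin d, F (i, k) := by
      intro i
      rw [tsum_fintype]
      exact (Fin.sum_univ_eq_sum_range (fun l => lam (i * d + l)) d).symm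
    have hrS : Summable r := hSF.prod.congr fun i => (hrF i).symm
    have hrT : ∑' i, r i = 1 := by
      calc ∑' i, r i = ∑' i, ∑' k : Fin d, F (i, k) := tsum_congr hrF
        _ = ∑' p, F p := (Summable.tsum_prod hSF).symm
        _ = 1 := hFT
    have hc1 : ∑ k ∈ Finset.range d, c k = 1 := by
      calc ∑ k ∈ Finset.range d, c k
          = ∑' j, ∑ k ∈ Finset.range d, lam (j * d + k) :=
            (Summable.tsum_finsetSum fun k _ => hcsum k).symm
        _ = ∑' j, r j := rfl
        _ = 1 := hrT
    -- summability and total mass of μ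
    have hcFinS : Summable (fun k : Fin d => c (k : ℕ)) := by
      exact Summable.of_finite
    set G : ℕ × Fin d → ℝ := fun p => r p.1 * (fun k : Fin d => c (k : ℕ)) p.2 with hG
    have hGS : Summable G :=
      hrS.mul_of_nonneg hcFinS (fun i => hrnn i) (fun k => hcnn _)
    have hμG : ∀ n, μ n = G (e n) := by
      intro n
      rw [hμeq]
      show c (n % d) * r (n / d) = r (n / d) * c ((Fin.ofNat d n : Fin d) : ℕ)
      rw [Fin.val_ofNat]
      ring
    have hμS : Summable μ := (e.summable_iff.mpr hGS).congr fun n => (hμG n).symm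
    have hμ1 : ∑' n, μ n = 1 := by
      calc ∑' n, μ n = ∑' n, G (e n) := tsum_congr hμG
        _ = ∑' p, G p := e.tsum_eq G
        _ = (∑' i, r i) * (∑' k : Fin d, c (k : ℕ)) :=
            (Summable.tsum_mul_tsum hrS hcFinS hGS).symm
        _ = 1 := by
            rw [hrT, one_mul, tsum_fintype,
              Fin.sum_univ_eq_sum_range (fun k => c k) d, hc1]
    -- basic facts about block 0
    have hr0 : r 0 = ∑ l ∈ Finset.range d, lam l := by simp [hr]
    have hr0t : r 0 + t = 1 := by
      rw [hr0, ht, Summable.sum_add_tsum_nat_add d hsum, h1]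
    have hr0le1 : r 0 ≤ 1 := by linarith
    -- the dominating function
    set H : ℕ → ℝ := fun n =>
      if n < d then (c n - lam n) + lam n * t else μ n + lam n with hH
    have hptS : ∀ n, |μ n - lam n| ≤ μ n + lam n := by
      intro n
      have h2 := hnn n
      have h3 := hμnn n
      rw [abs_le]
      constructor <;> linarith
    have hpt : ∀ n, |μ n - lam n| ≤ H n := by
      intro n
      by_cases hn : n < d
      · have hmod : n % d = n := Nat.mod_eq_of_lt hn
        have hdiv : n / d = 0 := Nat.div_eq_of_lt hn
        have hμn : μ n = c n * r 0 := by rw [hμeq, hmod, hdiv]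
        have hlc : lam n ≤ c n := by
          have h0 := Summable.le_tsum (hcsum n) 0 (fun j _ => hnn _)
          simpa using h0
        have hcr : c n * r 0 - lam n = (c n - lam n) * r 0 - lam n * t := by
          have htr : t = 1 - r 0 := by linarith
          rw [htr]; ring
        have hstep : |μ n - lam n| ≤ (c n - lam n) + lam n * t := by
          calc |μ n - lam n| = |(c n - lam n) * r 0 - lam n * t| := by rw [hμn, hcr]
            _ ≤ |(c n - lam n) * r 0| + |lam n * t| := abs_sub _ _
            _ ≤ (c n - lam n) + lam n * t := by
                rw [abs_of_nonneg (mul_nonneg (by linarith) (hrnn 0)),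
                  abs_of_nonneg (mul_nonneg (hnn n) ht0)]
                nlinarith [hrnn 0]
        calc |μ n - lam n| ≤ (c n - lam n) + lam n * t := hstep
          _ = H n := (if_pos hn).symm
      · calc |μ n - lam n| ≤ μ n + lam n := hptS n
          _ = H n := (if_neg hn).symm
    have hHshift : ∀ n, H (n + d) = μ (n + d) + lam (n + d) := fun n => if_neg (by omega)
    have hHS : Summable H := by
      refine (summable_nat_add_iff d).mp ?_
      exact ((summable_nat_add_iff d).mpr (hμS.add hsum)).congr fun n => (hHshift n).symm
    have habsS : Summable fun n => |μ n - lam n| :=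
      Summable.of_nonneg_of_le (fun n => abs_nonneg _) hptS (hμS.add hsum)
    -- sum over block 0
    have hsum0 : ∑ n ∈ Finset.range d, H n ≤ 2 * t := by
      have h01 : ∑ n ∈ Finset.range d, H n
          = ∑ n ∈ Finset.range d, ((c n - lam n) + lam n * t) :=
        Finset.sum_congr rfl fun n hn => if_pos (Finset.mem_range.mp hn)
      have h02 : ∑ n ∈ Finset.range d, ((c n - lam n) + lam n * t)
          = (1 - r 0) + r 0 * t := by
        rw [Finset.sum_add_distrib, Finset.sum_sub_distrib, hc1, ← Finset.sum_mul, ← hr0]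
      rw [h01, h02]
      nlinarith [hrnn 0]
    -- sum over the other blocks
    have hμ0 : ∑ n ∈ Finset.range d, μ n = r 0 := by
      have h03 : ∑ n ∈ Finset.range d, μ n = ∑ n ∈ Finset.range d, c n * r 0 := by
        refine Finset.sum_congr rfl fun n hn => ?_
        have hn' := Finset.mem_range.mp hn
        rw [hμeq, Nat.mod_eq_of_lt hn', Nat.div_eq_of_lt hn']
      rw [h03, ← Finset.sum_mul, hc1, one_mul]
    have hμtail : ∑' n, μ (n + d) = 1 - r 0 := by
      have h04 := Summable.sum_add_tsum_nat_add d hμS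
      rw [hμ1, hμ0] at h04
      linarith
    have hsum1 : ∑' n, H (n + d) = 2 * t := by
      calc ∑' n, H (n + d) = ∑' n, (μ (n + d) + lam (n + d)) := tsum_congr hHshift
        _ = (∑' n, μ (n + d)) + ∑' n, lam (n + d) :=
            Summable.tsum_add ((summable_nat_add_iff d).mpr hμS) ((summable_nat_add_iff d).mpr hsum)
        _ = 2 * t := by rw [hμtail, ← ht]; linarith
    calc ∑' n, |μ n - lam n| ≤ ∑' n, H n := Summable.tsum_le_tsum hpt habsS hHS
      _ = ∑ n ∈ Finset.range d, H n + ∑' n, H (n + d) := (Summable.sum_add_tsum_nat_add d hHS).symm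
      _ ≤ 2 * t + 2 * t := by rw [hsum1]; linarith [hsum0]
      _ = 4 * t := by ring
  have htail : Tendsto (fun d : ℕ => 4 * ∑' n, lam (n + d)) atTop (nhds 0) := by
    have h := (tendsto_sum_nat_add lam).const_mul (4 : ℝ)
    simpa using h
  refine squeeze_zero' (Filter.Eventually.of_forall fun d => tsum_nonneg fun n => abs_nonneg _)
    ?_ htail
  filter_upwards [Filter.eventually_ge_atTop 1] with d hd using key d hd
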